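/- arXiv:1806.09953 — 3 statements merged into one kernel-verified Lean document; each statement's English description precedes it below -/
import Mathlib

section
/- Let k ≥ 7 be odd, let G be a graph on n vertices containing no odd cycle of length less than k, fix a k-cycle v_0v_1…v_{k−1} in G with vertex set C and good sequences D_j (0 ≤ j ≤ k−1), and for a vertex w define its contribution c(w) = (1/2)·|{j : w ∈ A_1(D_j)}| + ∑_{i=2}^{k−1} |{j : w ∈ A_i(D_j)}|. If w has no neighbors in C, then c(w) ≤ k−2. -/
/-- `f` realizes a cycle of length `ℓ` in `G`: an injective map from `ZMod ℓ` whose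
consecutive images are adjacent. -/
def IsCycleMap {V : Type*} (G : SimpleGraph V) {ℓ : ℕ} (f : ZMod ℓ → V) : Prop :=
  Function.Injective f ∧ ∀ i, G.Adj (f i) (f (i + 1))

/-- `G` contains no odd cycle of length less than `k`. -/
def NoShortOddCycle {V : Type*} (G : SimpleGraph V) (k : ℕ) : Prop :=
  ∀ ℓ : ℕ, Odd ℓ → 3 ≤ ℓ → ℓ < k → ∀ f : ZMod ℓ → V, ¬ IsCycleMap G f

/-- The good sequence associated to the cycle `f = (v_0, v_1, …, v_{k-1})`:
the entries `v_2` and `v_3` are swapped. -/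
def goodOfCycle {V : Type*} {k : ℕ} (f : ZMod k → V) : ZMod k → V :=
  fun i => if i = 2 then f 3 else if i = 3 then f 2 else f i

/-- `z` is a good sequence in `G`: it arises from some `k`-cycle of `G`
(quantifying over all cycle maps accounts for all `2k` rotations and reflections). -/
def IsGoodSeq {V : Type*} (G : SimpleGraph V) {k : ℕ} (z : ZMod k → V) : Prop :=
  ∃ f : ZMod k → V, IsCycleMap G f ∧ z = goodOfCycle f

/-- The vertex sequence `z₀, z₁, z₃, z₂, z₄, …, z_{i-1}, w` (indices `0, …, i`,
with the final entry `w` at index `i`). -/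
def seqAt {V : Type*} {k : ℕ} (z : ZMod k → V) (w : V) (i : ℕ) : ℕ → V :=
  fun a => if a = i then w else if a = 2 then z 3 else if a = 3 then z 2 else z (a : ZMod k)

/-- `q 0, q 1, …, q i` is an induced path in `G`. -/
def IsInducedPathOn {V : Type*} (G : SimpleGraph V) (q : ℕ → V) (i : ℕ) : Prop :=
  (∀ a b, a ≤ i → b ≤ i → q a = q b → a = b) ∧
  (∀ a b, a ≤ i → b ≤ i → (G.Adj (q a) (q b) ↔ (b = a + 1 ∨ a = b + 1)))

/-- `q 0, q 1, …, q (k-1)` is an induced cycle in `G`. -/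
def IsInducedCycleOn {V : Type*} (G : SimpleGraph V) (q : ℕ → V) (k : ℕ) : Prop :=
  (∀ a b, a < k → b < k → q a = q b → a = b) ∧
  (∀ a b, a < k → b < k →
    (G.Adj (q a) (q b) ↔
      ((b = a + 1 ∨ a = b + 1) ∨ (a = 0 ∧ b = k - 1) ∨ (b = 0 ∧ a = k - 1))))

/-- The set `A_i(D)` for the good sequence `D = z` (of a graph `G` without odd cycles of
length less than `k`). -/
def Aset {V : Type*} (G : SimpleGraph V) (k : ℕ) (z : ZMod k → V) (i : ℕ) : Set V :=
  if i = 0 then Set.univ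
  else if i = 1 then G.neighborSet (z 0)
  else if i = 2 then {w | w ∉ G.neighborSet (z 0) ∧ G.dist (z 1) w = 2}
  else if i = 3 then G.neighborSet (z 1) ∩ G.neighborSet (z 2)
  else if i = k - 1 then {w | IsInducedCycleOn G (seqAt z w (k - 1)) k}
  else {w | IsInducedPathOn G (seqAt z w i) i}

/-- The weight `w(D) = ∏_{i=0}^{k-1} |A_i(D)|⁻¹` of a good sequence `D = z`. -/
noncomputable def weight {V : Type*} (G : SimpleGraph V) (k : ℕ) (z : ZMod k → V) : ℝ :=
  ∏ i ∈ Finset.range k, ((Nat.card ↥(Aset G k z i) : ℝ))⁻¹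

/-- The good sequence `D_j = (v_j, v_{j+1}, v_{j+3}, v_{j+2}, v_{j+4}, …, v_{j+k-1})`
associated to the cycle `f = (v_0, …, v_{k-1})` (indices mod `k`). -/
def goodRot {V : Type*} {k : ℕ} (f : ZMod k → V) (j : ZMod k) : ZMod k → V :=
  goodOfCycle (fun i => f (j + i))

/-- The contribution of a vertex `w` to the sum `∑_j (n_{1,j}/2 + ∑_{i=2}^{k-1} n_{i,j})`
for the cycle `f`:
`c(w) = (1/2)·|{j : w ∈ A_1(D_j)}| + ∑_{i=2}^{k-1} |{j : w ∈ A_i(D_j)}|`. -/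
noncomputable def contrib {V : Type*} (G : SimpleGraph V) (k : ℕ) (f : ZMod k → V)
    (w : V) : ℝ :=
  (1 / 2) * (Nat.card ↥{j : ZMod k | w ∈ Aset G k (goodRot f j) 1} : ℝ) +
    ∑ i ∈ Finset.Icc 2 (k - 1),
      (Nat.card ↥{j : ZMod k | w ∈ Aset G k (goodRot f j) i} : ℝ)


lemma midpoint_of_dist_two {V : Type*} {G : SimpleGraph V} {u w : V} (h : G.dist u w = 2) :
    ∃ x, G.Adj u x ∧ G.Adj x w := by
  obtain ⟨p, hp⟩ := SimpleGraph.exists_walk_of_dist_ne_zero (by omega : G.dist u w ≠ 0)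
  rw [h] at hp
  cases p with
  | nil => simp at hp
  | cons h1 q =>
    cases q with
    | nil => simp at hp
    | cons h2 r =>
      cases r with
      | nil => exact ⟨_, h1, h2⟩
      | cons h3 s => simp [SimpleGraph.Walk.length_cons] at hp

lemma penta {V : Type*} {G : SimpleGraph V} {k : ℕ} (hk : 7 ≤ k) (hG : NoShortOddCycle G k)
    {u v x y w : V} (huv : G.Adj u v) (hux : G.Adj u x) (hxw : G.Adj x w)
    (hwy : G.Adj w y) (hyv : G.Adj y v) (hwu : w ≠ u) (hwv : w ≠ v)
    (hxv : x ≠ v) (hyu : y ≠ u) : False := by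
  by_cases hxy : x = y
  · subst hxy
    refine hG 3 (by decide) le_rfl (by omega) ![u, x, v] ⟨?_, ?_⟩
    · intro a b hab
      have h1 := hux.ne
      have h2 := hxv
      have h3 := huv.ne
      fin_cases a <;> fin_cases b <;> simp_all <;> rfl
    · intro i
      fin_cases i
      exacts [hux, hyv, huv.symm]
  · refine hG 5 (by decide) (by omega) (by omega) ![u, x, w, y, v] ⟨?_, ?_⟩
    · intro a b hab
      have h1 := hux.ne
      have h2 := hxw.ne
      have h3 := hwy.ne
      have h4 := hyv.ne
      have h5 := huv.ne
      fin_cases a <;> fin_cases b <;> simp_all <;> rfl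
    · intro i
      fin_cases i
      exacts [hux, hxw, hwy, hyv, huv.symm]


/-- If a vertex `w` has no neighbours on the `k`-cycle `f`, then its contribution is at
most `k - 2`. -/
theorem contrib_of_no_neighbors {V : Type*} [Fintype V] (k : ℕ) (hodd : Odd k)
    (hk : 7 ≤ k) (G : SimpleGraph V) (hG : NoShortOddCycle G k)
    (f : ZMod k → V) (hf : IsCycleMap G f) (w : V)
    (hw : ∀ i : ZMod k, ¬ G.Adj w (f i)) :
    contrib G k f w ≤ (k : ℝ) - 2 := by
  classical
  haveI : NeZero k := ⟨by omega⟩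
  have gval : ∀ (j x : ZMod k), ∃ m, goodRot f j x = f m := by
    intro j x
    unfold goodRot goodOfCycle
    split_ifs <;> exact ⟨_, rfl⟩
  have key : ∀ (j : ZMod k) (i a : ℕ), a ≠ i →
      ∃ m, seqAt (goodRot f j) w i a = f m := by
    intro j i a ha
    unfold seqAt
    rw [if_neg ha]
    split_ifs <;> exact gval j _
  have seqAt_last : ∀ (j : ZMod k) (i : ℕ), seqAt (goodRot f j) w i i = w := by
    intro j i
    unfold seqAt
    rw [if_pos rfl]
  -- A1 is empty
  have e1 : {j : ZMod k | w ∈ Aset G k (goodRot f j) 1} = (∅ : Set (ZMod k)) := by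
    ext j
    simp only [Set.mem_setOf_eq, Set.mem_empty_iff_false, iff_false]
    intro hmem
    rw [show Aset G k (goodRot f j) 1 = G.neighborSet (goodRot f j 0) by simp [Aset]] at hmem
    obtain ⟨m, hm⟩ := gval j 0
    rw [hm, SimpleGraph.mem_neighborSet] at hmem
    exact hw m hmem.symm
  -- A_i is empty for 3 ≤ i ≤ k-1
  have e3 : ∀ i ∈ Finset.Icc 3 (k - 1),
      {j : ZMod k | w ∈ Aset G k (goodRot f j) i} = (∅ : Set (ZMod k)) := by
    intro i hi
    rw [Finset.mem_Icc] at hi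
    ext j
    simp only [Set.mem_setOf_eq, Set.mem_empty_iff_false, iff_false]
    intro hmem
    rcases eq_or_ne i 3 with h3 | h3
    · subst h3
      rw [show Aset G k (goodRot f j) 3
          = (G.neighborSet (goodRot f j 1) ∩ G.neighborSet (goodRot f j 2) : Set V) by
        simp [Aset]] at hmem
      obtain ⟨m, hm⟩ := gval j 1
      have := hmem.1
      rw [hm, SimpleGraph.mem_neighborSet] at this
      exact hw m this.symm
    rcases eq_or_ne i (k - 1) with hl | hl
    · subst hl
      rw [show Aset G k (goodRot f j) (k - 1)
          = {w | IsInducedCycleOn G (seqAt (goodRot f j) w (k - 1)) k} by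
        unfold Aset
        rw [if_neg (by omega), if_neg (by omega), if_neg (by omega), if_neg (by omega),
          if_pos rfl]] at hmem
      obtain ⟨hinj, hadj⟩ := hmem
      have hAdj : G.Adj (seqAt (goodRot f j) w (k - 1) 0)
          (seqAt (goodRot f j) w (k - 1) (k - 1)) :=
        (hadj 0 (k - 1) (by omega) (by omega)).mpr (Or.inr (Or.inl ⟨rfl, rfl⟩))
      obtain ⟨m, hm⟩ := key j (k - 1) 0 (by omega)
      rw [hm, seqAt_last] at hAdj
      exact hw m hAdj.symm
    · rw [show Aset G k (goodRot f j) i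
          = {w | IsInducedPathOn G (seqAt (goodRot f j) w i) i} by
        unfold Aset
        rw [if_neg (by omega), if_neg (by omega), if_neg (by omega), if_neg (by omega),
          if_neg hl]] at hmem
      obtain ⟨hinj, hadj⟩ := hmem
      have hAdj : G.Adj (seqAt (goodRot f j) w i (i - 1)) (seqAt (goodRot f j) w i i) :=
        (hadj (i - 1) i (by omega) le_rfl).mpr (Or.inl (by omega))
      obtain ⟨m, hm⟩ := key j i (i - 1) (by omega)
      rw [hm, seqAt_last] at hAdj
      exact hw m hAdj.symm
  -- the A2 count
  have hcast : ∀ a b : ℕ, a < k → b < k → a ≠ b → ((a : ZMod k) ≠ (b : ZMod k)) := by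
    intro a b ha hb hab h
    have := congrArg ZMod.val h
    rw [ZMod.val_cast_of_lt ha, ZMod.val_cast_of_lt hb] at this
    exact hab this
  have h12 : (1 : ZMod k) ≠ 2 := by
    have := hcast 1 2 (by omega) (by omega) (by omega)
    simpa using this
  have h13 : (1 : ZMod k) ≠ 3 := by
    have := hcast 1 3 (by omega) (by omega) (by omega)
    simpa using this
  set S : Set (ZMod k) := {j : ZMod k | G.dist (f (j + 1)) w = 2} with hSdef
  have hcons : ∀ j : ZMod k, j ∈ S → j + 1 ∈ S → False := by
    intro j hj hj1
    obtain ⟨x, hx1, hx2⟩ := midpoint_of_dist_two hj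
    obtain ⟨y, hy1, hy2⟩ := midpoint_of_dist_two hj1
    refine penta hk hG (hf.2 (j + 1)) hx1 hx2 hy2.symm hy1.symm ?_ ?_ ?_ ?_
    · intro h; exact hw (j + 1 + 1) (by rw [h]; exact hf.2 (j + 1))
    · intro h; exact hw (j + 1) (by rw [h]; exact (hf.2 (j + 1)).symm)
    · intro h; rw [h] at hx2; exact hw (j + 1 + 1) hx2.symm
    · intro h; rw [h] at hy2; exact hw (j + 1) hy2.symm
  have hScard : Nat.card ↥S ≤ k - 2 := by
    have hinj2 : Set.InjOn (fun x : ZMod k => x + 1) S := by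
      intro a _ b _ h
      simpa using h
    have himg : (fun x : ZMod k => x + 1) '' S ⊆ Sᶜ := by
      rintro _ ⟨a, ha, rfl⟩ hmem
      exact hcons a ha hmem
    have hA : ((fun x : ZMod k => x + 1) '' S).ncard = S.ncard :=
      Set.ncard_image_of_injOn hinj2
    have hB : ((fun x : ZMod k => x + 1) '' S).ncard ≤ Sᶜ.ncard :=
      Set.ncard_le_ncard himg (Set.toFinite _)
    have hC : S.ncard + Sᶜ.ncard = k := by
      rw [Set.ncard_add_ncard_compl S (Set.toFinite _) (Set.toFinite _), Nat.card_zmod]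
    have hD : Nat.card ↥S = S.ncard := (Nat.card_coe_set_eq S)
    omega
  have hT : {j : ZMod k | w ∈ Aset G k (goodRot f j) 2} ⊆ S := by
    intro j hj
    simp only [Set.mem_setOf_eq] at hj
    rw [show Aset G k (goodRot f j) 2
        = {w | w ∉ G.neighborSet (goodRot f j 0) ∧ G.dist (goodRot f j 1) w = 2} by
      simp [Aset]] at hj
    have hz1 : goodRot f j 1 = f (j + 1) := by
      unfold goodRot goodOfCycle
      rw [if_neg h12, if_neg h13]
    have := hj.2
    rw [hz1] at this
    exact this
  have hTcard : Nat.card ↥{j : ZMod k | w ∈ Aset G k (goodRot f j) 2} ≤ k - 2 :=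
    le_trans (Nat.card_mono (Set.toFinite S) hT) hScard
  -- assemble
  unfold contrib
  rw [e1]
  rw [show Finset.Icc 2 (k - 1) = insert 2 (Finset.Icc 3 (k - 1)) by
    ext a
    simp only [Finset.mem_Icc, Finset.mem_insert]
    omega]
  rw [Finset.sum_insert (by simp)]
  have hzero : ∑ i ∈ Finset.Icc 3 (k - 1),
      (Nat.card ↥{j : ZMod k | w ∈ Aset G k (goodRot f j) i} : ℝ) = 0 :=
    Finset.sum_eq_zero (fun i hi => by rw [e3 i hi]; simp)
  rw [hzero]
  have hc2 : (Nat.card ↥{j : ZMod k | w ∈ Aset G k (goodRot f j) 2} : ℝ) ≤ (k : ℝ) - 2 := by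
    have h1 : ((Nat.card ↥{j : ZMod k | w ∈ Aset G k (goodRot f j) 2} : ℕ) : ℝ)
        ≤ ((k - 2 : ℕ) : ℝ) := by exact_mod_cast hTcard
    have h2 : ((k - 2 : ℕ) : ℝ) = (k : ℝ) - 2 := by
      have : (2 : ℕ) ≤ k := by omega
      push_cast [Nat.cast_sub this]
      ring
    linarith
  simp only [show (Nat.card ↥(∅ : Set (ZMod k)) : ℝ) = 0 by simp]
  linarith
end

section
/- Let k ≥ 7 be odd, let G be a graph on n vertices containing no odd cycle of length less than k, fix a k-cycle v_0v_1…v_{k−1} in G with vertex set C and good sequences D_j (0 ≤ j ≤ k−1), and for a vertex w define its contribution c(w) = (1/2)·|{j : w ∈ A_1(D_j)}| + ∑_{i=2}^{k−1} |{j : w ∈ A_i(D_j)}|. If w has exactly one neighbor in C, then c(w) ≤ k − 3 + 1/2. -/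
section Aux

variable {V : Type*} {G : SimpleGraph V} {k : ℕ}

lemma build_cycle (hG : NoShortOddCycle G k) {ℓ : ℕ} (hodd : Odd ℓ)
    (hℓ : ℓ < k) (h2 : 2 ≤ ℓ) (p : ℕ → V)
    (hinj : ∀ a b, a < ℓ → b < ℓ → p a = p b → a = b)
    (hadj : ∀ a, a + 1 < ℓ → G.Adj (p a) (p (a + 1)))
    (hwrap : G.Adj (p (ℓ - 1)) (p 0)) : False := by
  have h3 : 3 ≤ ℓ := by obtain ⟨m, hm⟩ := hodd; omega
  haveI : NeZero ℓ := ⟨by omega⟩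
  apply hG ℓ hodd h3 hℓ (fun i => p i.val)
  constructor
  · intro i j hij
    exact ZMod.val_injective ℓ (hinj _ _ (ZMod.val_lt i) (ZMod.val_lt j) hij)
  · intro i
    have hval : (i + 1).val = (i.val + 1) % ℓ := by
      rw [ZMod.val_add, ZMod.val_one_eq_one_mod, Nat.mod_eq_of_lt (by omega : 1 < ℓ)]
    by_cases h : i.val = ℓ - 1
    · have h0 : (i + 1).val = 0 := by
        rw [hval, h]
        have h2' : ℓ - 1 + 1 = ℓ := by omega
        rw [h2', Nat.mod_self]
      simp only [h0, h]
      exact hwrap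
    · have hlt : i.val + 1 < ℓ := by have := ZMod.val_lt i; omega
      have h1 : (i + 1).val = i.val + 1 := by rw [hval, Nat.mod_eq_of_lt hlt]
      simp only [h1]
      exact hadj _ hlt

lemma arc_cycle (hG : NoShortOddCycle G k) (hk : 7 ≤ k)
    {f : ZMod k → V} (hf : IsCycleMap G f)
    (e r : ℕ) (hr : 1 ≤ r) (s : ZMod k) (g : ℕ → V)
    (hoddl : Odd (e + 1 + r)) (hℓ : e + 1 + r < k)
    (hgC : ∀ b, b < r → ∀ q : ZMod k, g b ≠ f q)
    (hginj : ∀ b c, b < r → c < r → g b = g c → b = c)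
    (hfirst : G.Adj (f (s + (e : ZMod k))) (g 0))
    (hgadj : ∀ b, b + 1 < r → G.Adj (g b) (g (b + 1)))
    (hlast : G.Adj (g (r - 1)) (f s)) : False := by
  haveI : NeZero k := ⟨by omega⟩
  have castInj : ∀ a b : ℕ, a < k → b < k → ((a : ZMod k) = (b : ZMod k)) → a = b := by
    intro a b ha hb h
    have h2 := congrArg ZMod.val h
    rwa [ZMod.val_natCast_of_lt ha, ZMod.val_natCast_of_lt hb] at h2
  refine build_cycle hG hoddl hℓ (by omega)
    (fun a => if a ≤ e then f (s + (a : ZMod k)) else g (a - (e + 1))) ?_ ?_ ?_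
  · intro a b ha hb hab
    by_cases h1 : a ≤ e <;> by_cases h2 : b ≤ e
    · rw [if_pos h1, if_pos h2] at hab
      exact castInj a b (by omega) (by omega) (add_left_cancel (hf.1 hab))
    · rw [if_pos h1, if_neg h2] at hab
      exact absurd hab.symm (hgC (b - (e + 1)) (by omega) _)
    · rw [if_neg h1, if_pos h2] at hab
      exact absurd hab (hgC (a - (e + 1)) (by omega) _)
    · rw [if_neg h1, if_neg h2] at hab
      have := hginj _ _ (by omega) (by omega) hab
      omega
  · intro a ha
    by_cases h1 : a + 1 ≤ e
    · rw [if_pos (by omega : a ≤ e), if_pos h1]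
      have := hf.2 (s + (a : ZMod k))
      have hc : ((a + 1 : ℕ) : ZMod k) = (a : ZMod k) + 1 := by push_cast; ring
      rw [hc, ← add_assoc]
      exact this
    · by_cases h2 : a ≤ e
      · have hae : a = e := by omega
        rw [if_pos h2, if_neg (by omega)]
        have h0 : a + 1 - (e + 1) = 0 := by omega
        rw [h0, hae]
        exact hfirst
      · rw [if_neg h2, if_neg (by omega)]
        have h0 : a + 1 - (e + 1) = (a - (e + 1)) + 1 := by omega
        rw [h0]
        exact hgadj _ (by omega)
  · have h1 : e + 1 + r - 1 = e + r := by omega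
    rw [h1, if_neg (by omega : ¬ e + r ≤ e), if_pos (by omega : 0 ≤ e)]
    have h2 : e + r - (e + 1) = r - 1 := by omega
    rw [h2]
    simpa using hlast

lemma no_even_chord (hG : NoShortOddCycle G k) (hk : 7 ≤ k)
    {f : ZMod k → V} (hf : IsCycleMap G f) (s t : ZMod k)
    (h : G.Adj (f t) (f s)) (heven : Even ((t - s).val))
    (h2 : 2 ≤ (t - s).val) (hd : (t - s).val ≤ k - 2) : False := by
  haveI : NeZero k := ⟨by omega⟩
  have castInj : ∀ a b : ℕ, a < k → b < k → ((a : ZMod k) = (b : ZMod k)) → a = b := by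
    intro a b ha hb h
    have h2 := congrArg ZMod.val h
    rwa [ZMod.val_natCast_of_lt ha, ZMod.val_natCast_of_lt hb] at h2
  set d := (t - s).val with hddef
  refine build_cycle hG (Even.add_one heven) (by omega : d + 1 < k) (by omega)
    (fun a => f (s + (a : ZMod k))) ?_ ?_ ?_
  · intro a b ha hb hab
    exact castInj a b (by omega) (by omega) (add_left_cancel (hf.1 hab))
  · intro a ha
    have := hf.2 (s + (a : ZMod k))
    have hc : ((a + 1 : ℕ) : ZMod k) = (a : ZMod k) + 1 := by push_cast; ring
    rw [hc, ← add_assoc]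
    exact this
  · have h1 : d + 1 - 1 = d := by omega
    have h2 : ((d : ℕ) : ZMod k) = t - s := ZMod.natCast_rightInverse _
    rw [h1, h2]
    simpa [add_sub_cancel] using h

lemma chord (hG : NoShortOddCycle G k) (hodd : Odd k) (hk : 7 ≤ k)
    {f : ZMod k → V} (hf : IsCycleMap G f) (s t : ZMod k)
    (h : G.Adj (f s) (f t)) : t = s + 1 ∨ s = t + 1 := by
  haveI : NeZero k := ⟨by omega⟩
  have hst : s ≠ t := fun he => G.irrefl (he ▸ h)
  have hsub : t - s ≠ 0 := sub_ne_zero.mpr (Ne.symm hst)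
  set d := (t - s).val with hddef
  have hdk : d < k := ZMod.val_lt _
  have hd0 : d ≠ 0 := fun h0 => hsub ((ZMod.val_eq_zero _).mp h0)
  have hcast : ((d : ℕ) : ZMod k) = t - s := ZMod.natCast_rightInverse _
  by_cases h1 : d = 1
  · left
    have : t - s = 1 := by rw [← hcast, h1, Nat.cast_one]
    rw [← this]; ring
  by_cases hk1 : d = k - 1
  · right
    have hc : ((k - 1 : ℕ) : ZMod k) = -1 := by
      rw [Nat.cast_sub (by omega : 1 ≤ k), ZMod.natCast_self, Nat.cast_one]; ring
    have : t - s = -1 := by rw [← hcast, hk1, hc]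
    have : t = s - 1 := by linear_combination this
    rw [this]; ring
  exfalso
  rcases Nat.even_or_odd d with he | ho
  · exact no_even_chord hG hk hf s t h.symm he (by omega) (by omega)
  · have hneg : (s - t).val = k - d := by
      have hst2 : s - t = -(t - s) := by ring
      rw [hst2, ZMod.neg_val, if_neg hsub]
    refine no_even_chord hG hk hf t s h ?_ ?_ ?_ <;> rw [hneg]
    · exact Nat.Odd.sub_odd hodd ho
    · omega
    · omega

end Aux

/-- If a vertex `w` has exactly one neighbour on the `k`-cycle `f`, then its contribution
is at most `k - 3 + 1/2`. -/
theorem contrib_of_one_neighbor {V : Type*} [Fintype V] (k : ℕ) (hodd : Odd k)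
    (hk : 7 ≤ k) (G : SimpleGraph V) (hG : NoShortOddCycle G k)
    (f : ZMod k → V) (hf : IsCycleMap G f) (w : V)
    (hw : Nat.card ↥{i : ZMod k | G.Adj w (f i)} = 1) :
    contrib G k f w ≤ (k : ℝ) - 3 + 1 / 2 := by
  haveI : NeZero k := ⟨by omega⟩
  have castInj : ∀ a b : ℕ, a < k → b < k → ((a : ZMod k) = (b : ZMod k)) → a = b := by
    intro a b ha hb h
    have h2 := congrArg ZMod.val h
    rwa [ZMod.val_natCast_of_lt ha, ZMod.val_natCast_of_lt hb] at h2
  have hneN : ∀ c : ℕ, 0 < c → c < k → ((c : ZMod k) ≠ 0) := by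
    intro c h1 h2 h
    have h3 := castInj c 0 h2 (by omega) (by simpa using h)
    omega
  -- the unique neighbour i0
  have hw' : ({i : ZMod k | G.Adj w (f i)}).ncard = 1 := by
    rw [← Nat.card_coe_set_eq]; exact hw
  obtain ⟨i0, hi0⟩ := Set.ncard_eq_one.mp hw'
  have hAdj : G.Adj w (f i0) := by
    have h : i0 ∈ ({i0} : Set (ZMod k)) := rfl
    rw [← hi0] at h; exact h
  have huniq : ∀ p : ZMod k, G.Adj w (f p) → p = i0 := by
    intro p hp
    have h : p ∈ {i : ZMod k | G.Adj w (f i)} := hp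
    rw [hi0] at h; exact h
  -- w is not on the cycle
  have hwC : ∀ p : ZMod k, w ≠ f p := by
    intro p hwp
    have h1 : p + 1 = i0 := huniq _ (by rw [hwp]; exact hf.2 p)
    have h2 : p - 1 = i0 := by
      apply huniq
      have h3 := (hf.2 (p - 1)).symm
      have h4 : p - 1 + 1 = p := by ring
      rw [h4] at h3
      rw [hwp]; exact h3
    have h5 : (2 : ZMod k) = 0 := by linear_combination h1 - h2
    exact (by exact_mod_cast hneN 2 (by omega) (by omega) : (2 : ZMod k) ≠ 0) h5
  -- evaluation of goodRot
  have h02 : (0 : ZMod k) ≠ 2 := by exact_mod_cast fun h => (by omega : (0:ℕ) ≠ 2) (castInj 0 2 (by omega) (by omega) h)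
  have h03 : (0 : ZMod k) ≠ 3 := by exact_mod_cast fun h => (by omega : (0:ℕ) ≠ 3) (castInj 0 3 (by omega) (by omega) h)
  have h12 : (1 : ZMod k) ≠ 2 := by exact_mod_cast fun h => (by omega : (1:ℕ) ≠ 2) (castInj 1 2 (by omega) (by omega) h)
  have h13 : (1 : ZMod k) ≠ 3 := by exact_mod_cast fun h => (by omega : (1:ℕ) ≠ 3) (castInj 1 3 (by omega) (by omega) h)
  have hz0 : ∀ j : ZMod k, goodRot f j 0 = f j := by
    intro j
    show (if (0 : ZMod k) = 2 then f (j + 3) else if (0 : ZMod k) = 3 then f (j + 2) else f (j + 0)) = f j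
    rw [if_neg h02, if_neg h03, add_zero]
  have hz1 : ∀ j : ZMod k, goodRot f j 1 = f (j + 1) := by
    intro j
    show (if (1 : ZMod k) = 2 then f (j + 3) else if (1 : ZMod k) = 3 then f (j + 2) else f (j + 1)) = f (j + 1)
    rw [if_neg h12, if_neg h13]
  have hz2 : ∀ j : ZMod k, goodRot f j 2 = f (j + 3) := by
    intro j
    show (if (2 : ZMod k) = 2 then f (j + 3) else if (2 : ZMod k) = 3 then f (j + 2) else f (j + 2)) = f (j + 3)
    rw [if_pos rfl]
  have hzc : ∀ (j : ZMod k) (c : ℕ), 4 ≤ c → c < k → goodRot f j ((c : ℕ) : ZMod k) = f (j + (c : ZMod k)) := by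
    intro j c h4 hck
    have hc2 : ((c : ℕ) : ZMod k) ≠ 2 := by
      exact_mod_cast fun h => (by omega : c ≠ 2) (castInj c 2 hck (by omega) h)
    have hc3 : ((c : ℕ) : ZMod k) ≠ 3 := by
      exact_mod_cast fun h => (by omega : c ≠ 3) (castInj c 3 hck (by omega) h)
    show (if ((c : ℕ) : ZMod k) = 2 then f (j + 3) else if ((c : ℕ) : ZMod k) = 3 then f (j + 2) else f (j + c)) = f (j + c)
    rw [if_neg hc2, if_neg hc3]
  -- extract middle vertex of a 2-walk
  have hwalk2 : ∀ u : V, G.dist u w = 2 → ∃ x, G.Adj u x ∧ G.Adj x w := by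
    intro u hd
    obtain ⟨p, hp⟩ := SimpleGraph.exists_walk_of_dist_ne_zero (by rw [hd]; omega)
    rw [hd] at hp
    cases p with
    | nil => simp at hp
    | cons h q =>
      cases q with
      | nil => simp at hp
      | cons h' q' =>
        cases q' with
        | nil => exact ⟨_, h, h'⟩
        | cons h'' q'' =>
          simp only [SimpleGraph.Walk.length_cons] at hp
          omega
  -- classification of A_2 membership
  have hclass : ∀ j : ZMod k, ¬ G.Adj (f j) w → G.dist (f (j + 1)) w = 2 →
      j = i0 - 2 ∨ j = i0 + 2 ∨ j = i0 - 4 := by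
    intro j hnadj hdist
    obtain ⟨x, hmx, hxw⟩ := hwalk2 _ hdist
    have hji0 : j ≠ i0 := fun h => hnadj (h ▸ hAdj.symm)
    have hmi0 : j + 1 ≠ i0 := by
      intro h
      rw [h] at hdist
      have h1 : G.dist (f i0) w = 1 := SimpleGraph.dist_eq_one_iff_adj.mpr hAdj.symm
      omega
    by_cases hx : ∃ p : ZMod k, x = f p
    · obtain ⟨p, rfl⟩ := hx
      have hp : p = i0 := huniq p hxw.symm
      rw [hp] at hmx
      rcases chord hG hodd hk hf (j + 1) i0 hmx with hc | hc
      · left; linear_combination -hc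
      · exact absurd (by linear_combination hc : j = i0) hji0
    · push_neg at hx
      set d := ((j + 1) - i0).val with hd
      have hdk : d < k := ZMod.val_lt _
      have hdd : ((d : ℕ) : ZMod k) = (j + 1) - i0 := ZMod.natCast_rightInverse _
      have hd0 : d ≠ 0 := by
        intro h0
        apply hmi0
        have h1 : (j + 1) - i0 = 0 := (ZMod.val_eq_zero _).mp h0
        linear_combination h1
      have hd1 : d ≠ 1 := by
        intro h1
        apply hji0
        have h2 : (j + 1) - i0 = 1 := by rw [← hdd, h1, Nat.cast_one]
        linear_combination h2
      by_cases hdk1 : d = k - 1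
      · left
        have hc : ((k - 1 : ℕ) : ZMod k) = -1 := by
          rw [Nat.cast_sub (by omega : 1 ≤ k), ZMod.natCast_self, Nat.cast_one]; ring
        have h2 : (j + 1) - i0 = -1 := by rw [← hdd, hdk1, hc]
        linear_combination h2
      by_cases hd3 : d = 3
      · right; left
        have h2 : (j + 1) - i0 = 3 := by rw [← hdd, hd3]; norm_num
        linear_combination h2
      by_cases hdk3 : d = k - 3
      · right; right
        have hc : ((k - 3 : ℕ) : ZMod k) = -3 := by
          rw [Nat.cast_sub (by omega : 3 ≤ k), ZMod.natCast_self]; push_cast; ring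
        have h2 : (j + 1) - i0 = -3 := by rw [← hdd, hdk3, hc]
        linear_combination h2
      exfalso
      obtain ⟨m, hm⟩ := hodd
      rcases Nat.even_or_odd d with he | ho
      · -- d even, 2 ≤ d ≤ k - 5; cycle f(i0), …, f(j+1), x, w
        obtain ⟨c, hc⟩ := he
        refine arc_cycle hG hk hf d 2 (by omega) i0 (fun b => if b = 0 then x else w)
          ⟨c + 1, by omega⟩ (by omega) ?_ ?_ ?_ ?_ ?_
        · intro b hb q
          by_cases hb0 : b = 0
          · simpa [hb0] using hx q
          · simpa [hb0] using hwC q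
        · intro b c hb hc hbc
          by_cases hb0 : b = 0 <;> by_cases hc0 : c = 0 <;>
            simp only [hb0, hc0, if_pos, if_neg, reduceIte] at hbc ⊢ <;>
            first
              | omega
              | exact absurd hbc hxw.ne
              | exact absurd hbc.symm hxw.ne
        · have harc : i0 + ((d : ℕ) : ZMod k) = j + 1 := by rw [hdd]; ring
          rw [harc]
          simpa using hmx
        · intro b hb
          have hb0 : b = 0 := by omega
          subst hb0
          simpa using hxw
        · simpa using hAdj
      · -- d odd ≥ 5; cycle f(j+1), …, f(i0), w, x
        obtain ⟨c, hc⟩ := ho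
        have hsubne : (j + 1) - i0 ≠ 0 := by
          intro h0; apply hmi0; linear_combination h0
        have hneg : (i0 - (j + 1)).val = k - d := by
          have h' : i0 - (j + 1) = -((j + 1) - i0) := by ring
          rw [h', ZMod.neg_val, if_neg hsubne]
        refine arc_cycle hG hk hf (k - d) 2 (by omega) (j + 1) (fun b => if b = 0 then w else x)
          ⟨m - c + 1, by omega⟩ (by omega) ?_ ?_ ?_ ?_ ?_
        · intro b hb q
          by_cases hb0 : b = 0
          · simpa [hb0] using hwC q
          · simpa [hb0] using hx q
        · intro b c hb hc hbc
          by_cases hb0 : b = 0 <;> by_cases hc0 : c = 0 <;>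
            simp only [hb0, hc0, if_pos, if_neg, reduceIte] at hbc ⊢ <;>
            first
              | omega
              | exact absurd hbc.symm hxw.ne
              | exact absurd hbc hxw.ne
        · have harc : (j + 1) + ((k - d : ℕ) : ZMod k) = i0 := by
            have h1 : ((k - d : ℕ) : ZMod k) = i0 - (j + 1) := by
              rw [← hneg]; exact ZMod.natCast_rightInverse _
            rw [h1]; ring
          rw [harc]
          simpa using hAdj.symm
        · intro b hb
          have hb0 : b = 0 := by omega
          subst hb0
          simpa using hxw.symm
        · simpa using hmx.symm
  -- at most one of the two "distance 3" options occurs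
  have hexcl : ¬ (G.dist (f (i0 + 3)) w = 2 ∧ G.dist (f (i0 - 3)) w = 2) := by
    rintro ⟨h1, h2⟩
    obtain ⟨x, hx1, hx2⟩ := hwalk2 _ h1
    obtain ⟨y, hy1, hy2⟩ := hwalk2 _ h2
    have hxC : ∀ p : ZMod k, x ≠ f p := by
      intro p hxp
      have hp : p = i0 := huniq p (hxp ▸ hx2).symm
      rw [hxp, hp] at hx1
      rcases chord hG hodd hk hf _ _ hx1 with hc | hc
      · exact (by exact_mod_cast hneN 4 (by omega) (by omega) : (4 : ZMod k) ≠ 0)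
          (by linear_combination -hc)
      · exact (by exact_mod_cast hneN 2 (by omega) (by omega) : (2 : ZMod k) ≠ 0)
          (by linear_combination hc)
    have hyC : ∀ p : ZMod k, y ≠ f p := by
      intro p hyp
      have hp : p = i0 := huniq p (hyp ▸ hy2).symm
      rw [hyp, hp] at hy1
      rcases chord hG hodd hk hf _ _ hy1 with hc | hc
      · exact (by exact_mod_cast hneN 2 (by omega) (by omega) : (2 : ZMod k) ≠ 0)
          (by linear_combination hc)
      · exact (by exact_mod_cast hneN 4 (by omega) (by omega) : (4 : ZMod k) ≠ 0)
          (by linear_combination -hc)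
    have hc6 : ((k - 6 : ℕ) : ZMod k) = -6 := by
      rw [Nat.cast_sub (by omega : 6 ≤ k), ZMod.natCast_self]; push_cast; ring
    have harc : (i0 + 3) + ((k - 6 : ℕ) : ZMod k) = i0 - 3 := by rw [hc6]; ring
    obtain ⟨m, hm⟩ := hodd
    by_cases hxy : x = y
    · refine arc_cycle hG hk hf (k - 6) 1 (by omega) (i0 + 3) (fun _ => x)
        ⟨m - 2, by omega⟩ (by omega) ?_ ?_ ?_ ?_ ?_
      · intro b hb q; exact hxC q
      · intro b c hb hc _; omega
      · rw [harc, hxy]; exact hy1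
      · intro b hb; omega
      · exact hx1.symm
    · refine arc_cycle hG hk hf (k - 6) 3 (by omega) (i0 + 3)
        (fun b => if b = 0 then y else if b = 1 then w else x)
        ⟨m - 1, by omega⟩ (by omega) ?_ ?_ ?_ ?_ ?_
      · intro b hb q
        by_cases hb0 : b = 0
        · simpa [hb0] using hyC q
        · by_cases hb1 : b = 1
          · simpa [hb0, hb1] using hwC q
          · simpa [hb0, hb1] using hxC q
      · intro b c hb hc hbc
        rcases (by omega : b = 0 ∨ b = 1 ∨ b = 2) with rfl | rfl | rfl <;>
          rcases (by omega : c = 0 ∨ c = 1 ∨ c = 2) with rfl | rfl | rfl <;>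
          norm_num at hbc ⊢ <;>
          first
            | exact absurd hbc hy2.ne
            | exact absurd hbc.symm hy2.ne
            | exact absurd hbc.symm hxy
            | exact absurd hbc hxy
            | exact absurd hbc.symm hx2.ne
            | exact absurd hbc hx2.ne
      · rw [harc]
        simpa using hy1
      · intro b hb
        rcases (by omega : b = 0 ∨ b = 1) with rfl | rfl
        · simpa using hy2
        · simpa using hx2.symm
      · simpa using hx1.symm
  -- membership in A_2
  have hmem2 : ∀ j : ZMod k, w ∈ Aset G k (goodRot f j) 2 ↔
      (¬ G.Adj (f j) w ∧ G.dist (f (j + 1)) w = 2) := by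
    intro j
    norm_num [Aset, Set.mem_setOf_eq, SimpleGraph.mem_neighborSet, hz0, hz1]
  -- |S_2| ≤ 2
  have hS2 : ({j : ZMod k | w ∈ Aset G k (goodRot f j) 2}).ncard ≤ 2 := by
    have hpair : ∀ a b : ZMod k, ({a, b} : Set (ZMod k)).ncard ≤ 2 := by
      intro a b
      refine (Set.ncard_insert_le _ _).trans ?_
      simp
    by_cases hmem : w ∈ Aset G k (goodRot f (i0 + 2)) 2
    · have hsub : {j : ZMod k | w ∈ Aset G k (goodRot f j) 2} ⊆ ({i0 - 2, i0 + 2} : Set (ZMod k)) := by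
        intro j hj
        have hj' := (hmem2 j).mp hj
        rcases hclass j hj'.1 hj'.2 with h | h | h
        · exact Or.inl h
        · exact Or.inr h
        · exfalso
          apply hexcl
          constructor
          · have hm' := ((hmem2 _).mp hmem).2
            have he : i0 + 2 + 1 = i0 + 3 := by ring
            rwa [he] at hm'
          · have hm' := hj'.2
            rw [h] at hm'
            have he : i0 - 4 + 1 = i0 - 3 := by ring
            rwa [he] at hm'
      exact (Set.ncard_le_ncard hsub (Set.toFinite _)).trans (hpair _ _)
    · have hsub : {j : ZMod k | w ∈ Aset G k (goodRot f j) 2} ⊆ ({i0 - 2, i0 - 4} : Set (ZMod k)) := by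
        intro j hj
        have hj' := (hmem2 j).mp hj
        rcases hclass j hj'.1 hj'.2 with h | h | h
        · exact Or.inl h
        · exact absurd (h ▸ hj) hmem
        · exact Or.inr h
      exact (Set.ncard_le_ncard hsub (Set.toFinite _)).trans (hpair _ _)
  -- S_1 = {i0}
  have hS1 : {j : ZMod k | w ∈ Aset G k (goodRot f j) 1} = {i0} := by
    ext j
    norm_num [Aset, Set.mem_setOf_eq, SimpleGraph.mem_neighborSet, hz0,
      Set.mem_singleton_iff]
    constructor
    · intro h; exact huniq j h.symm
    · intro h; rw [h]; exact hAdj.symm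
  -- S_3 = ∅
  have hS3 : {j : ZMod k | w ∈ Aset G k (goodRot f j) 3} = ∅ := by
    apply Set.eq_empty_iff_forall_notMem.mpr
    intro j hj
    norm_num [Aset, Set.mem_setOf_eq, Set.mem_inter_iff,
      SimpleGraph.mem_neighborSet, hz1, hz2] at hj
    have e1 : j + 1 = i0 := huniq _ hj.1.symm
    have e2 : j + 3 = i0 := huniq _ hj.2.symm
    exact (by exact_mod_cast hneN 2 (by omega) (by omega) : (2 : ZMod k) ≠ 0)
      (by linear_combination e2 - e1)
  -- S_{k-1} = ∅
  have hSk : {j : ZMod k | w ∈ Aset G k (goodRot f j) (k - 1)} = ∅ := by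
    apply Set.eq_empty_iff_forall_notMem.mpr
    intro j hj
    have hA : Aset G k (goodRot f j) (k - 1) =
        {w | IsInducedCycleOn G (seqAt (goodRot f j) w (k - 1)) k} := by
      rw [Aset, if_neg (by omega), if_neg (by omega), if_neg (by omega), if_neg (by omega),
        if_pos rfl]
    rw [Set.mem_setOf_eq, hA, Set.mem_setOf_eq] at hj
    have hq0 : seqAt (goodRot f j) w (k - 1) 0 = f j := by
      show (if 0 = k - 1 then w else if 0 = 2 then goodRot f j 3 else if 0 = 3 then goodRot f j 2
        else goodRot f j ((0 : ℕ) : ZMod k)) = f j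
      rw [if_neg (by omega), if_neg (by omega), if_neg (by omega), Nat.cast_zero]
      exact hz0 j
    have hqk1 : seqAt (goodRot f j) w (k - 1) (k - 1) = w := by
      show (if k - 1 = k - 1 then w else _) = w
      rw [if_pos rfl]
    have hqk2 : seqAt (goodRot f j) w (k - 1) (k - 2) = f (j + ((k - 2 : ℕ) : ZMod k)) := by
      show (if k - 2 = k - 1 then w else if k - 2 = 2 then goodRot f j 3 else if k - 2 = 3
        then goodRot f j 2 else goodRot f j ((k - 2 : ℕ) : ZMod k)) = _
      rw [if_neg (by omega), if_neg (by omega), if_neg (by omega)]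
      exact hzc j (k - 2) (by omega) (by omega)
    have ha1 : G.Adj (seqAt (goodRot f j) w (k - 1) 0) (seqAt (goodRot f j) w (k - 1) (k - 1)) :=
      (hj.2 0 (k - 1) (by omega) (by omega)).mpr (Or.inr (Or.inl ⟨rfl, rfl⟩))
    have ha2 : G.Adj (seqAt (goodRot f j) w (k - 1) (k - 2))
        (seqAt (goodRot f j) w (k - 1) (k - 1)) :=
      (hj.2 (k - 2) (k - 1) (by omega) (by omega)).mpr (Or.inl (Or.inl (by omega)))
    rw [hq0, hqk1] at ha1
    rw [hqk2, hqk1] at ha2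
    have e1 : j = i0 := huniq j ha1.symm
    have e2 : j + ((k - 2 : ℕ) : ZMod k) = i0 := huniq _ ha2.symm
    exact hneN (k - 2) (by omega) (by omega) (by linear_combination e2 - e1)
  -- |S_i| ≤ 1 for 4 ≤ i ≤ k - 2
  have hTi : ∀ i ∈ Finset.Icc 4 (k - 2),
      (Nat.card ↥{j : ZMod k | w ∈ Aset G k (goodRot f j) i} : ℝ) ≤ 1 := by
    intro i hi
    rw [Finset.mem_Icc] at hi
    have hsub : {j : ZMod k | w ∈ Aset G k (goodRot f j) i} ⊆
        ({i0 - ((i - 1 : ℕ) : ZMod k)} : Set (ZMod k)) := by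
      intro j hj
      have hA : Aset G k (goodRot f j) i =
          {w | IsInducedPathOn G (seqAt (goodRot f j) w i) i} := by
        rw [Aset, if_neg (by omega), if_neg (by omega), if_neg (by omega), if_neg (by omega),
          if_neg (by omega)]
      rw [Set.mem_setOf_eq, hA, Set.mem_setOf_eq] at hj
      have hqi : seqAt (goodRot f j) w i i = w := by
        show (if i = i then w else _) = w
        rw [if_pos rfl]
      have hqi1 : seqAt (goodRot f j) w i (i - 1) = f (j + ((i - 1 : ℕ) : ZMod k)) := by
        by_cases h4 : i = 4
        · subst h4
          show (if 3 = 4 then w else if 3 = 2 then goodRot f j 3 else if 3 = 3 then goodRot f j 2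
            else goodRot f j ((3 : ℕ) : ZMod k)) = _
          rw [if_neg (by omega), if_neg (by omega), if_pos rfl, hz2 j]
          norm_num
        · show (if i - 1 = i then w else if i - 1 = 2 then goodRot f j 3 else if i - 1 = 3
            then goodRot f j 2 else goodRot f j ((i - 1 : ℕ) : ZMod k)) = _
          rw [if_neg (by omega), if_neg (by omega), if_neg (by omega)]
          exact hzc j (i - 1) (by omega) (by omega)
      have hadj : G.Adj (seqAt (goodRot f j) w i (i - 1)) (seqAt (goodRot f j) w i i) :=
        (hj.2 (i - 1) i (by omega) (le_refl i)).mpr (Or.inl (by omega))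
      rw [hqi, hqi1] at hadj
      have he := huniq _ hadj.symm
      simp only [Set.mem_singleton_iff]
      linear_combination he
    rw [Nat.card_coe_set_eq]
    have h1 := Set.ncard_le_ncard hsub (Set.finite_singleton _)
    rw [Set.ncard_singleton] at h1
    exact_mod_cast h1
  -- final assembly
  simp only [contrib]
  have hIcc : Finset.Icc 2 (k - 1) =
      insert 2 (insert 3 (insert (k - 1) (Finset.Icc 4 (k - 2)))) := by
    ext a
    simp only [Finset.mem_Icc, Finset.mem_insert]
    omega
  rw [hIcc, Finset.sum_insert (by simp only [Finset.mem_insert, Finset.mem_Icc]; omega),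
    Finset.sum_insert (by simp only [Finset.mem_insert, Finset.mem_Icc]; omega),
    Finset.sum_insert (by simp only [Finset.mem_Icc]; omega)]
  have hc1 : (Nat.card ↥{j : ZMod k | w ∈ Aset G k (goodRot f j) 1} : ℝ) = 1 := by
    rw [Nat.card_coe_set_eq, hS1, Set.ncard_singleton]
    norm_num
  have hc2 : (Nat.card ↥{j : ZMod k | w ∈ Aset G k (goodRot f j) 2} : ℝ) ≤ 2 := by
    rw [Nat.card_coe_set_eq]
    exact_mod_cast hS2
  have hc3 : (Nat.card ↥{j : ZMod k | w ∈ Aset G k (goodRot f j) 3} : ℝ) = 0 := by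
    rw [Nat.card_coe_set_eq, hS3, Set.ncard_empty]
    norm_num
  have hck : (Nat.card ↥{j : ZMod k | w ∈ Aset G k (goodRot f j) (k - 1)} : ℝ) = 0 := by
    rw [Nat.card_coe_set_eq, hSk, Set.ncard_empty]
    norm_num
  have hsum : ∑ i ∈ Finset.Icc 4 (k - 2),
      (Nat.card ↥{j : ZMod k | w ∈ Aset G k (goodRot f j) i} : ℝ) ≤ (k : ℝ) - 5 := by
    have h1 := Finset.sum_le_card_nsmul (Finset.Icc 4 (k - 2))
      (fun i => (Nat.card ↥{j : ZMod k | w ∈ Aset G k (goodRot f j) i} : ℝ)) 1 hTi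
    rw [Nat.card_Icc] at h1
    have h2 : k - 2 + 1 - 4 = k - 5 := by omega
    rw [h2, nsmul_eq_mul, mul_one] at h1
    refine h1.trans ?_
    rw [Nat.cast_sub (by omega : 5 ≤ k)]
    norm_num
  rw [hc1, hc3, hck]
  linarith
end

section
/- Let k ≥ 7 be odd, let G be a graph on n vertices containing no odd cycle of length less than k, fix a k-cycle v_0v_1…v_{k−1} in G with vertex set C and good sequences D_j (0 ≤ j ≤ k−1), and for a vertex w define its contribution c(w) = (1/2)·|{j : w ∈ A_1(D_j)}| + ∑_{i=2}^{k−1} |{j : w ∈ A_i(D_j)}|. If w has exactly two neighbors in C, then c(w) = k − 1. -/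
section AuxiliaryLemmas

set_option linter.unusedSectionVars false

variable {V : Type*} {G : SimpleGraph V} {k : ℕ}

lemma noOddWalk (hG : NoShortOddCycle G k) :
    ∀ ℓ, Odd ℓ → ℓ < k → ∀ g : ℕ → V,
      (∀ i < ℓ, G.Adj (g i) (g (i+1))) → g ℓ = g 0 → False := by
  intro ℓ
  induction ℓ using Nat.strong_induction_on with
  | _ ℓ ih =>
  intro hodd hlt g hadj hclose
  have hodd' := hodd
  rw [Nat.odd_iff] at hodd'
  rcases (by omega : ℓ = 1 ∨ 3 ≤ ℓ) with h1 | h3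
  · subst h1
    have := hadj 0 (by omega)
    rw [show (0:ℕ)+1 = 1 from rfl, hclose] at this
    exact G.irrefl this
  by_cases hinj : ∀ s t, s < ℓ → t < ℓ → g s = g t → s = t
  · haveI : NeZero ℓ := ⟨by omega⟩
    haveI : Fact (1 < ℓ) := ⟨by omega⟩
    apply hG ℓ hodd h3 hlt (fun i => g i.val)
    constructor
    · intro i j hij
      exact ZMod.val_injective ℓ (hinj _ _ (ZMod.val_lt i) (ZMod.val_lt j) hij)
    · intro i
      have hv : (i + 1).val = (i.val + 1) % ℓ := by
        rw [ZMod.val_add, ZMod.val_one]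
      rcases Nat.lt_or_ge (i.val + 1) ℓ with h | h
      · show G.Adj (g i.val) (g (i+1).val)
        rw [hv, Nat.mod_eq_of_lt h]
        exact hadj i.val (by omega)
      · have hs : i.val + 1 = ℓ := by have := ZMod.val_lt i; omega
        show G.Adj (g i.val) (g (i+1).val)
        rw [hv, hs, Nat.mod_self]
        have h2 := hadj i.val (by omega)
        rwa [hs, hclose] at h2
  · push_neg at hinj
    obtain ⟨s, t, hs, ht, heq, hne⟩ := hinj
    obtain ⟨s, t, hst, ht, heq⟩ : ∃ s t, s < t ∧ t < ℓ ∧ g s = g t := by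
      rcases hne.lt_or_gt with h | h
      exacts [⟨s, t, h, ht, heq⟩, ⟨t, s, h, hs, heq.symm⟩]
    have hparity : Odd (t - s) ∨ Odd (ℓ - (t - s)) := by
      rw [Nat.odd_iff, Nat.odd_iff]; omega
    rcases hparity with hO | hO
    · refine ih (t - s) (by omega) hO (by omega) (fun a => g (s + a)) ?_ ?_
      · intro i hi
        have := hadj (s + i) (by omega)
        rwa [show s + i + 1 = s + (i+1) from by omega] at this
      · show g (s + (t - s)) = g (s + 0)
        rw [show s + (t - s) = t from by omega, show s + 0 = s from rfl]
        exact heq.symm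
    · refine ih (ℓ - (t - s)) (by omega) hO (by omega)
        (fun a => if a ≤ s then g a else g (a + (t - s))) ?_ ?_
      · intro i hi
        rcases (by omega : i + 1 ≤ s ∨ i = s ∨ s < i) with h | h | h
        · simp only [if_pos (by omega : i ≤ s), if_pos h]
          exact hadj i (by omega)
        · subst h
          simp only [if_pos le_rfl, if_neg (by omega : ¬ i + 1 ≤ i)]
          rw [heq, show i + 1 + (t - i) = t + 1 from by omega]
          exact hadj t ht
        · simp only [if_neg (by omega : ¬ i ≤ s), if_neg (by omega : ¬ i + 1 ≤ s)]
          have := hadj (i + (t - s)) (by omega)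
          rwa [show i + (t-s) + 1 = i + 1 + (t-s) from by omega] at this
      · simp only [if_neg (by omega : ¬ ℓ - (t - s) ≤ s), if_pos (Nat.zero_le s)]
        rw [show ℓ - (t - s) + (t - s) = ℓ from by omega]
        exact hclose


lemma castval {k : ℕ} [NeZero k] (a : ZMod k) : ((a.val : ℕ) : ZMod k) = a := by
  rw [ZMod.natCast_val, ZMod.cast_id]

lemma walk_parity (hG : NoShortOddCycle G k) (hk : 7 ≤ k) {f : ZMod k → V}
    (hf : IsCycleMap G f) (a b : ZMod k) (m : ℕ) (g : ℕ → V)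
    (h0 : g 0 = f a) (hm : g m = f b) (hadj : ∀ i < m, G.Adj (g i) (g (i+1)))
    (hodd : Odd (m + (a-b).val)) (hlt : m + (a-b).val < k) : False := by
  haveI : NeZero k := ⟨by omega⟩
  set d := (a - b).val with hd
  apply noOddWalk hG (m + d) hodd hlt
    (fun i => if i ≤ m then g i else f (b + ((i - m : ℕ) : ZMod k)))
  · intro i hi
    rcases lt_trichotomy i m with h | h | h
    · simp only [if_pos (le_of_lt h), if_pos (by omega : i + 1 ≤ m)]
      exact hadj i h
    · subst h
      simp only [if_pos le_rfl, if_neg (by omega : ¬ (i+1 ≤ i))]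
      rw [hm, show ((i + 1 - i : ℕ) : ZMod k) = 1 from by rw [Nat.add_sub_cancel_left]; norm_num]
      exact hf.2 b
    · simp only [if_neg (by omega : ¬ i ≤ m), if_neg (by omega : ¬ (i+1 ≤ m))]
      have h1 : ((i + 1 - m : ℕ) : ZMod k) = ((i - m : ℕ) : ZMod k) + 1 := by
        rw [show i + 1 - m = (i - m) + 1 from by omega]; push_cast; ring
      rw [h1, ← add_assoc]
      exact hf.2 _
  · by_cases hd0 : d = 0
    · have hab : a = b := by
        have : a - b = 0 := by rw [← castval (a - b), ← hd, hd0]; simp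
        linear_combination this
      simp only [hd0, Nat.add_zero, if_pos le_rfl, if_pos (Nat.zero_le m), h0, hm, hab]
    · simp only [if_neg (by omega : ¬ (m + d ≤ m)), if_pos (Nat.zero_le m), h0]
      rw [show m + d - m = d from by omega, hd, castval]
      ring_nf

section Consts
variable {k : ℕ}
-- (c : ZMod k) ≠ 0 for relevant small constants
lemma zmodNe (hk : 7 ≤ k) (hodd : Odd k) (c : ℕ) (h1 : 0 < c)
    (h2 : c < k ∨ (Even c ∧ c < 2 * k)) : (c : ZMod k) ≠ 0 := by
  haveI : NeZero k := ⟨by omega⟩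
  intro h
  rw [ZMod.natCast_eq_zero_iff] at h
  obtain ⟨c', rfl⟩ := h
  rcases h2 with h2 | ⟨he, h2⟩
  · rcases c' with _ | n
    · omega
    · have : k ≤ k * (n + 1) := Nat.le_mul_of_pos_right k (by omega)
      omega
  · have : Even c' := by
      rcases Nat.even_mul.1 he with h | h
      · exact absurd h (by rwa [← Nat.not_even_iff_odd] at hodd)
      · exact h
    obtain ⟨n, rfl⟩ := this
    rcases n with _ | n
    · omega
    · have : k * 2 ≤ k * ((n+1) + (n+1)) := Nat.mul_le_mul_left k (by omega)
      omega

lemma valSubAdd (hk : 7 ≤ k) {a b : ZMod k} (h : a ≠ b) :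
    (a - b).val + (b - a).val = k := by
  haveI : NeZero k := ⟨by omega⟩
  have h1 : (a - b) + (b - a) = 0 := by ring
  have h2 := ZMod.val_add (a - b) (b - a)
  rw [h1, ZMod.val_zero] at h2
  have h3 : (a - b).val ≠ 0 := by
    intro h0
    rw [ZMod.val_eq_zero, sub_eq_zero] at h0
    exact h h0
  have l1 := ZMod.val_lt (a - b)
  have l2 := ZMod.val_lt (b - a)
  have hdvd : k ∣ (a-b).val + (b-a).val := Nat.dvd_of_mod_eq_zero h2.symm
  obtain ⟨c, hc⟩ := hdvd
  rcases c with _ | _ | n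
  · omega
  · omega
  · have : k * 2 ≤ k * (n + 1 + 1) := Nat.mul_le_mul_left k (by omega)
    omega

lemma natCastInj (hk : 7 ≤ k) {c c' : ℕ} (hc : c < k) (hc' : c' < k)
    (h : (c : ZMod k) = (c' : ZMod k)) : c = c' := by
  have := congrArg ZMod.val h
  rwa [ZMod.val_cast_of_lt hc, ZMod.val_cast_of_lt hc'] at this

lemma valEqOfEq (hk : 7 ≤ k) {a : ZMod k} {c : ℕ} (hc : c < k) (h : a.val = c) :
    a = (c : ZMod k) := by
  haveI : NeZero k := ⟨by omega⟩
  rw [← h, ZMod.natCast_val, ZMod.cast_id]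

end Consts

section Steps
variable (hG : NoShortOddCycle G k) (hk : 7 ≤ k) (hko : Odd k) {f : ZMod k → V}
  (hf : IsCycleMap G f)
include hG hk hko hf

/-- U1 : the cycle is induced. -/
lemma cycleAdj {s t : ZMod k} (h : G.Adj (f s) (f t)) : t = s + 1 ∨ s = t + 1 := by
  haveI : NeZero k := ⟨by omega⟩
  have hst : s ≠ t := by rintro rfl; exact G.irrefl h
  have hsum := valSubAdd hk hst
  have hz1 : (s - t).val ≠ 0 := by
    intro h0; rw [ZMod.val_eq_zero] at h0; exact hst (by linear_combination h0)
  have hz2 : (t - s).val ≠ 0 := by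
    intro h0; rw [ZMod.val_eq_zero] at h0; exact hst (by linear_combination -h0)
  by_cases hd2 : (t - s).val = 1
  · left; have := valEqOfEq hk (by omega) hd2; push_cast at this; linear_combination this
  by_cases hd1 : (s - t).val = 1
  · right; have := valEqOfEq hk (by omega) hd1; push_cast at this; linear_combination this
  exfalso
  have hko' := hko; rw [Nat.odd_iff] at hko'
  have hpar : Odd (1 + (s - t).val) ∨ Odd (1 + (t - s).val) := by
    rw [Nat.odd_iff, Nat.odd_iff]; omega
  rcases hpar with hp | hp
  · exact walk_parity hG hk hf s t 1 (fun n => match n with | 0 => f s | _ => f t)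
      rfl rfl (by intro i hi; interval_cases i; exact h) hp (by omega)
  · exact walk_parity hG hk hf t s 1 (fun n => match n with | 0 => f t | _ => f s)
      rfl rfl (by intro i hi; interval_cases i; exact h.symm) hp (by omega)

/-- U2 : two neighbours on the cycle are at cycle-distance 2. -/
lemma twoNbrs {w : V} {a b : ZMod k} (h1 : G.Adj w (f a)) (h2 : G.Adj w (f b))
    (hne : a ≠ b) : b = a + 2 ∨ a = b + 2 := by
  haveI : NeZero k := ⟨by omega⟩
  have hsum := valSubAdd hk hne
  have hz1 : (a - b).val ≠ 0 := by
    intro h0; rw [ZMod.val_eq_zero] at h0; exact hne (by linear_combination h0)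
  have hz2 : (b - a).val ≠ 0 := by
    intro h0; rw [ZMod.val_eq_zero] at h0; exact hne (by linear_combination -h0)
  have hko' := hko; rw [Nat.odd_iff] at hko'
  have hpar : Odd (2 + (a - b).val) ∨ Odd (2 + (b - a).val) := by
    rw [Nat.odd_iff, Nat.odd_iff]; omega
  rcases hpar with hp | hp
  · left
    by_cases hlt : 2 + (a - b).val < k
    · exact absurd (walk_parity hG hk hf a b 2
        (fun n => match n with | 0 => f a | 1 => w | _ => f b) rfl rfl
        (by intro i hi; interval_cases i; exacts [h1.symm, h2]) hp hlt) (by simp)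
    · have hd2 : (b - a).val = 2 := by
        rw [Nat.odd_iff] at hp
        have := ZMod.val_lt (a - b)
        omega
      have := valEqOfEq hk (by omega) hd2; push_cast at this; linear_combination this
  · right
    by_cases hlt : 2 + (b - a).val < k
    · exact absurd (walk_parity hG hk hf b a 2
        (fun n => match n with | 0 => f b | 1 => w | _ => f a) rfl rfl
        (by intro i hi; interval_cases i; exacts [h2.symm, h1]) hp hlt) (by simp)
    · have hd1 : (a - b).val = 2 := by
        rw [Nat.odd_iff] at hp
        have := ZMod.val_lt (b - a)
        omega
      have := valEqOfEq hk (by omega) hd1; push_cast at this; linear_combination this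

/-- U3 : position of a vertex at distance 2 (via `u`) from `w`'s neighbour. -/
lemma threeStep {w u : V} {x a : ZMod k} (hx : G.Adj (f x) u) (hu : G.Adj u w)
    (hwa : G.Adj w (f a)) : x = a + 1 ∨ x = a - 1 ∨ x = a + 3 ∨ x = a - 3 := by
  haveI : NeZero k := ⟨by omega⟩
  by_cases hxa : x = a
  · exfalso
    subst hxa
    refine walk_parity hG hk hf x x 3
      (fun n => match n with | 0 => f x | 1 => u | 2 => w | _ => f x) rfl rfl
      (by intro i hi; interval_cases i; exacts [hx, hu, show G.Adj w (f _) from hwa]) ?_ ?_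
    · rw [sub_self, ZMod.val_zero]; decide
    · rw [sub_self, ZMod.val_zero]; omega
  have hsum := valSubAdd hk hxa
  have hz1 : (x - a).val ≠ 0 := by
    intro h0; rw [ZMod.val_eq_zero] at h0; exact hxa (by linear_combination h0)
  have hz2 : (a - x).val ≠ 0 := by
    intro h0; rw [ZMod.val_eq_zero] at h0; exact hxa (by linear_combination -h0)
  have hko' := hko; rw [Nat.odd_iff] at hko'
  have hpar : Odd (3 + (x - a).val) ∨ Odd (3 + (a - x).val) := by
    rw [Nat.odd_iff, Nat.odd_iff]; omega
  rcases hpar with hp | hp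
  · by_cases hlt : 3 + (x - a).val < k
    · exact absurd (walk_parity hG hk hf x a 3
        (fun n => match n with | 0 => f x | 1 => u | 2 => w | _ => f a) rfl rfl
        (by intro i hi; interval_cases i; exacts [hx, hu, show G.Adj w (f _) from hwa]) hp hlt) (by simp)
    · -- (x - a).val ∈ {k-3, k-1}, so (a - x).val ∈ {3, 1}
      have hv := ZMod.val_lt (x - a)
      rw [Nat.odd_iff] at hp
      have : (a - x).val = 3 ∨ (a - x).val = 1 := by omega
      rcases this with h3 | h3
      · have := valEqOfEq hk (by omega) h3; push_cast at this
        right; right; right; linear_combination -this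
      · have := valEqOfEq hk (by omega) h3; push_cast at this
        right; left; linear_combination -this
  · by_cases hlt : 3 + (a - x).val < k
    · exact absurd (walk_parity hG hk hf a x 3
        (fun n => match n with | 0 => f a | 1 => w | 2 => u | _ => f x) rfl rfl
        (by intro i hi; interval_cases i; exacts [hwa.symm, hu.symm, show G.Adj u (f _) from hx.symm]) hp hlt) (by simp)
    · have hv := ZMod.val_lt (a - x)
      rw [Nat.odd_iff] at hp
      have : (x - a).val = 3 ∨ (x - a).val = 1 := by omega
      rcases this with h3 | h3
      · have := valEqOfEq hk (by omega) h3; push_cast at this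
        right; right; left; linear_combination this
      · have := valEqOfEq hk (by omega) h3; push_cast at this
        left; linear_combination this

end Steps

lemma seqAt_eq (hk : 7 ≤ k) (hko : Odd k) (f : ZMod k → V) (j : ZMod k) (w : V) {i a : ℕ}
    (hai : a ≠ i) (hak : a < k) :
    seqAt (goodRot f j) w i a = f (j + (a : ZMod k)) := by
  haveI : NeZero k := ⟨by omega⟩
  have h32 : (3 : ZMod k) ≠ 2 := by
    intro h
    refine zmodNe hk hko 1 one_pos (by left; omega) ?_
    push_cast; linear_combination h
  have hc2 : ((2:ℕ) : ZMod k) = 2 := by push_cast; ring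
  have hc3 : ((3:ℕ) : ZMod k) = 3 := by push_cast; ring
  unfold seqAt
  rw [if_neg hai]
  by_cases h2 : a = 2
  · subst h2
    rw [if_pos rfl]
    show goodRot f j 3 = _
    unfold goodRot goodOfCycle
    simp [h32, hc2]
  · rw [if_neg h2]
    by_cases h3 : a = 3
    · subst h3
      rw [if_pos rfl]
      show goodRot f j 2 = _
      unfold goodRot goodOfCycle
      simp [hc3]
    · rw [if_neg h3]
      show goodRot f j (a : ZMod k) = _
      unfold goodRot goodOfCycle
      have ha2 : (a : ZMod k) ≠ 2 := by
        intro h; rw [← hc2] at h; exact h2 (natCastInj hk hak (by omega) h)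
      have ha3 : (a : ZMod k) ≠ 3 := by
        intro h; rw [← hc3] at h; exact h3 (natCastInj hk hak (by omega) h)
      simp only [if_neg ha2, if_neg ha3]

lemma seqAt_last {z : ZMod k → V} (w : V) (i : ℕ) : seqAt z w i i = w := by
  unfold seqAt; rw [if_pos rfl]

lemma goodRot_zero (hk : 7 ≤ k) (hko : Odd k) (f : ZMod k → V) (j : ZMod k) :
    goodRot f j 0 = f j := by
  have h1 : (0 : ZMod k) ≠ 2 := by
    intro h; exact zmodNe hk hko 2 (by omega) (by left; omega) (by push_cast; linear_combination -h)
  have h2 : (0 : ZMod k) ≠ 3 := by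
    intro h; exact zmodNe hk hko 3 (by omega) (by left; omega) (by push_cast; linear_combination -h)
  show goodOfCycle _ 0 = f j
  unfold goodOfCycle
  simp only [if_neg h1, if_neg h2, add_zero]

lemma goodRot_one (hk : 7 ≤ k) (hko : Odd k) (f : ZMod k → V) (j : ZMod k) :
    goodRot f j 1 = f (j + 1) := by
  have h1 : (1 : ZMod k) ≠ 2 := by
    intro h; exact zmodNe hk hko 1 (by omega) (by left; omega) (by push_cast; linear_combination -h)
  have h2 : (1 : ZMod k) ≠ 3 := by
    intro h; exact zmodNe hk hko 2 (by omega) (by left; omega) (by push_cast; linear_combination -h)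
  show goodOfCycle _ 1 = f (j + 1)
  unfold goodOfCycle
  simp only [if_neg h1, if_neg h2]

lemma goodRot_two (hk : 7 ≤ k) (hko : Odd k) (f : ZMod k → V) (j : ZMod k) :
    goodRot f j 2 = f (j + 3) := by
  show goodOfCycle _ 2 = f (j + 3)
  unfold goodOfCycle
  simp

lemma interface (hG : NoShortOddCycle G k) (hk : 7 ≤ k) (hko : Odd k) {f : ZMod k → V}
    (hf : IsCycleMap G f) (w : V) (hw : Nat.card ↥{i : ZMod k | G.Adj w (f i)} = 2) :
    ∃ α : ZMod k, (∀ t, G.Adj w (f t) ↔ (t = α ∨ t = α + 2)) ∧ ∀ c, w = f c → c = α + 1 := by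
  haveI : NeZero k := ⟨by omega⟩
  rw [Nat.card_coe_set_eq, Set.ncard_eq_two] at hw
  obtain ⟨a, b, hab, hS⟩ := hw
  have key : ∀ α : ZMod k, {i : ZMod k | G.Adj w (f i)} = {α, α + 2} →
      (∀ t, G.Adj w (f t) ↔ (t = α ∨ t = α + 2)) ∧ ∀ c, w = f c → c = α + 1 := by
    intro α hSα
    have H1 : ∀ t, G.Adj w (f t) ↔ (t = α ∨ t = α + 2) := by
      intro t
      constructor
      · intro h
        have : t ∈ {i : ZMod k | G.Adj w (f i)} := h
        rw [hSα] at this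
        simpa using this
      · intro h
        have : t ∈ ({α, α + 2} : Set (ZMod k)) := by simpa using h
        rw [← hSα] at this
        exact this
    refine ⟨H1, ?_⟩
    intro c hc
    have hp : G.Adj w (f (c + 1)) := by rw [hc]; exact hf.2 c
    have hm : G.Adj w (f (c - 1)) := by
      rw [hc]
      have := hf.2 (c - 1)
      rw [sub_add_cancel] at this
      exact this.symm
    rw [H1] at hp hm
    have h2 : (2 : ZMod k) ≠ 0 :=
      fun h => zmodNe hk hko 2 (by omega) (by left; omega) (by push_cast; linear_combination h)
    have h4 : (4 : ZMod k) ≠ 0 :=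
      fun h => zmodNe hk hko 4 (by omega) (by left; omega) (by push_cast; linear_combination h)
    rcases hp with hp | hp <;> rcases hm with hm | hm <;>
      first
        | linear_combination hp
        | exact absurd (by linear_combination hp - hm) h2
        | exact absurd (by linear_combination hp - hm) h4
  have ha : G.Adj w (f a) := by
    have : a ∈ {i : ZMod k | G.Adj w (f i)} := by rw [hS]; simp
    exact this
  have hb : G.Adj w (f b) := by
    have : b ∈ {i : ZMod k | G.Adj w (f i)} := by rw [hS]; simp
    exact this
  rcases twoNbrs hG hk hko hf ha hb hab with h | h
  · exact ⟨a, key a (by rw [hS, ← h])⟩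
  · exact ⟨b, key b (by rw [hS, ← h, Set.pair_comm])⟩

section Sets
variable (hG : NoShortOddCycle G k) (hk : 7 ≤ k) (hko : Odd k) {f : ZMod k → V}
  (hf : IsCycleMap G f) {w : V} {α : ZMod k}
  (H1 : ∀ t, G.Adj w (f t) ↔ (t = α ∨ t = α + 2)) (H2 : ∀ c, w = f c → c = α + 1)
include hG hk hko hf H1 H2

lemma setA1 : {j : ZMod k | w ∈ Aset G k (goodRot f j) 1} = {α, α + 2} := by
  ext j
  have hA : Aset G k (goodRot f j) 1 = G.neighborSet (goodRot f j 0) := by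
    unfold Aset; norm_num
  simp only [Set.mem_setOf_eq, hA, SimpleGraph.mem_neighborSet, goodRot_zero hk hko,
    Set.mem_insert_iff, Set.mem_singleton_iff]
  rw [G.adj_comm]
  exact H1 j

lemma setA3 : {j : ZMod k | w ∈ Aset G k (goodRot f j) 3} = {α - 1} := by
  have h2 : (2 : ZMod k) ≠ 0 :=
    fun h => zmodNe hk hko 2 (by omega) (by left; omega) (by push_cast; linear_combination h)
  have h4 : (4 : ZMod k) ≠ 0 :=
    fun h => zmodNe hk hko 4 (by omega) (by left; omega) (by push_cast; linear_combination h)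
  ext j
  have hA : Aset G k (goodRot f j) 3
      = ↑(G.neighborSet (goodRot f j 1) ∩ G.neighborSet (goodRot f j 2)) := by
    unfold Aset; norm_num
  simp only [Set.mem_setOf_eq, hA, Set.mem_inter_iff, SimpleGraph.mem_neighborSet,
    goodRot_one hk hko, goodRot_two hk hko, Set.mem_singleton_iff]
  rw [G.adj_comm, G.adj_comm (f (j+3)), H1, H1]
  constructor
  · rintro ⟨h1 | h1, h3 | h3⟩ <;>
      first
        | linear_combination h1
        | exact absurd (by linear_combination h3 - h1) h2
        | exact absurd (by linear_combination h3 - h1) h4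
  · intro h
    constructor
    · left; linear_combination h
    · right; linear_combination h

lemma setA2 : {j : ZMod k | w ∈ Aset G k (goodRot f j) 2} = {α - 2} := by
  haveI : NeZero k := ⟨by omega⟩
  have hcon : ∀ c : ℕ, 0 < c → (c < k ∨ (Even c ∧ c < 2 * k)) →
      ∀ x y : ZMod k, x - y = (c : ℕ) → x ≠ y := by
    intro c h1 h2 x y hxy heq
    exact zmodNe hk hko c h1 h2 (by rw [← hxy, heq, sub_self])
  have hadjα : G.Adj w (f α) := (H1 α).2 (Or.inl rfl)
  have hadjα2 : G.Adj w (f (α + 2)) := (H1 (α + 2)).2 (Or.inr rfl)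
  ext j
  have hA : Aset G k (goodRot f j) 2 =
      {v | v ∉ G.neighborSet (goodRot f j 0) ∧ G.dist (goodRot f j 1) v = 2} := by
    unfold Aset; norm_num
  simp only [Set.mem_setOf_eq, hA, SimpleGraph.mem_neighborSet, goodRot_zero hk hko,
    goodRot_one hk hko, Set.mem_singleton_iff]
  constructor
  · rintro ⟨hnadj, hdist⟩
    obtain ⟨p, hp⟩ := SimpleGraph.exists_walk_of_dist_ne_zero (by rw [hdist]; omega)
    rw [hdist] at hp
    -- extract the middle vertex of the length-2 walk
    obtain ⟨u, h1, h2'⟩ : ∃ u, G.Adj (f (j+1)) u ∧ G.Adj u w := by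
      cases p with
      | nil => simp at hp
      | cons h q =>
        cases q with
        | nil => simp at hp
        | cons h' q' =>
          cases q' with
          | nil => exact ⟨_, h, h'⟩
          | cons h'' q'' => simp at hp
    have t1 := threeStep hG hk hko hf h1 h2' hadjα
    have t2 := threeStep hG hk hko hf h1 h2' hadjα2
    have hc2 : (2 : ZMod k) ≠ 0 :=
      fun h => zmodNe hk hko 2 (by omega) (by left; omega) (by push_cast; linear_combination h)
    have hc4 : (4 : ZMod k) ≠ 0 :=
      fun h => zmodNe hk hko 4 (by omega) (by left; omega) (by push_cast; linear_combination h)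
    have hc6 : (6 : ZMod k) ≠ 0 :=
      fun h => zmodNe hk hko 6 (by omega) (by left; omega) (by push_cast; linear_combination h)
    have hc8 : (8 : ZMod k) ≠ 0 :=
      fun h => zmodNe hk hko 8 (by omega) (by right; exact ⟨by decide, by omega⟩)
        (by push_cast; linear_combination h)
    have hx : j + 1 = α + 1 ∨ j + 1 = α - 1 ∨ j + 1 = α + 3 := by
      rcases t1 with t1 | t1 | t1 | t1 <;> rcases t2 with t2 | t2 | t2 | t2 <;>
        first
          | (left; linear_combination t1)
          | (right; left; linear_combination t1)
          | (right; right; linear_combination t1)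
          | exact absurd (by linear_combination t1 - t2) hc2
          | exact absurd (by linear_combination t2 - t1) hc2
          | exact absurd (by linear_combination t1 - t2) hc4
          | exact absurd (by linear_combination t2 - t1) hc4
          | exact absurd (by linear_combination t1 - t2) hc6
          | exact absurd (by linear_combination t2 - t1) hc6
          | exact absurd (by linear_combination t1 - t2) hc8
          | exact absurd (by linear_combination t2 - t1) hc8
    rcases hx with hx | hx | hx
    · exfalso; apply hnadj; rw [show j = α from by linear_combination hx]; exact hadjα.symm
    · linear_combination hx
    · exfalso; apply hnadj; rw [show j = α + 2 from by linear_combination hx]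
      exact hadjα2.symm
  · rintro rfl
    constructor
    · intro hadj
      rcases (H1 _).1 hadj.symm with h | h
      · exact zmodNe hk hko 2 (by omega) (by left; omega) (by push_cast; linear_combination -h)
      · exact zmodNe hk hko 4 (by omega) (by left; omega) (by push_cast; linear_combination -h)
    · -- dist (f (α - 2 + 1)) w = 2
      have e1 : G.Adj (f (α - 2 + 1)) (f α) := by
        have := hf.2 (α - 2 + 1)
        rw [show α - 2 + 1 + 1 = α from by ring] at this
        exact this
      have e2 : G.Adj (f α) w := hadjα.symm
      have hle : G.dist (f (α - 2 + 1)) w ≤ 2 := by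
        have := SimpleGraph.dist_le
          (SimpleGraph.Walk.cons e1 (SimpleGraph.Walk.cons e2 SimpleGraph.Walk.nil))
        simpa using this
      have hne0 : G.dist (f (α - 2 + 1)) w ≠ 0 := by
        intro h0
        rcases SimpleGraph.dist_eq_zero_iff_eq_or_not_reachable.1 h0 with h | h
        · have := H2 _ h.symm
          exact zmodNe hk hko 2 (by omega) (by left; omega)
            (by push_cast; linear_combination -this)
        · exact h ⟨SimpleGraph.Walk.cons e1 (SimpleGraph.Walk.cons e2 SimpleGraph.Walk.nil)⟩
      have hne1 : G.dist (f (α - 2 + 1)) w ≠ 1 := by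
        intro h1
        rcases (H1 _).1 (SimpleGraph.dist_eq_one_iff_adj.1 h1).symm with h | h
        · exact zmodNe hk hko 1 (by omega) (by left; omega)
            (by push_cast; linear_combination -h)
        · exact zmodNe hk hko 3 (by omega) (by left; omega)
            (by push_cast; linear_combination -h)
      omega

lemma setPath (i : ℕ) (hi4 : 4 ≤ i) (hik : i ≤ k - 2) :
    {j : ZMod k | w ∈ Aset G k (goodRot f j) i} = {α + 1 - (i : ℕ)} := by
  haveI : NeZero k := ⟨by omega⟩
  have ci1 : ((i - 1 : ℕ) : ZMod k) = (i : ℕ) - 1 := by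
    push_cast [Nat.cast_sub (by omega : 1 ≤ i)]; ring
  have ci3 : ((i - 3 : ℕ) : ZMod k) = (i : ℕ) - 3 := by
    push_cast [Nat.cast_sub (by omega : 3 ≤ i)]; ring
  have hA : ∀ j : ZMod k, Aset G k (goodRot f j) i
      = {v | IsInducedPathOn G (seqAt (goodRot f j) v i) i} := by
    intro j
    unfold Aset
    rw [if_neg (by omega : ¬ i = 0), if_neg (by omega : ¬ i = 1), if_neg (by omega : ¬ i = 2),
      if_neg (by omega : ¬ i = 3), if_neg (by omega : ¬ i = k - 1)]
  have hq : ∀ (j : ZMod k) (a : ℕ), a ≠ i → a < k →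
      seqAt (goodRot f j) w i a = f (j + (a : ℕ)) := fun j a h1 h2 => seqAt_eq hk hko f j w h1 h2
  apply Set.eq_singleton_iff_unique_mem.2
  constructor
  · -- membership of j₀ = α + 1 - i
    set j₀ : ZMod k := α + 1 - (i : ℕ) with hj₀
    show w ∈ Aset G k (goodRot f j₀) i
    rw [hA]
    constructor
    · -- injectivity
      intro a b ha hb heq
      by_cases hai : a = i <;> by_cases hbi : b = i
      · omega
      · exfalso
        rw [hai, seqAt_last, hq j₀ b hbi (by omega)] at heq
        have hb' := H2 _ heq
        have : (b : ZMod k) = ((i : ℕ) : ZMod k) := by linear_combination hb'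
        exact hbi (natCastInj hk (by omega) (by omega) this)
      · exfalso
        rw [hbi, seqAt_last, hq j₀ a hai (by omega)] at heq
        have ha' := H2 _ heq.symm
        have : (a : ZMod k) = ((i : ℕ) : ZMod k) := by linear_combination ha'
        exact hai (natCastInj hk (by omega) (by omega) this)
      · rw [hq j₀ a hai (by omega), hq j₀ b hbi (by omega)] at heq
        have := hf.1 heq
        exact natCastInj hk (by omega) (by omega) (by linear_combination this)
    · -- adjacency
      intro a b ha hb
      by_cases hai : a = i <;> by_cases hbi : b = i
      · rw [hai, hbi, seqAt_last]
        exact iff_of_false (G.irrefl) (by omega)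
      · rw [hai, seqAt_last, hq j₀ b hbi (by omega), G.adj_comm]
        rw [G.adj_comm]  -- ensure direction Adj w _
        rw [H1]
        constructor
        · rintro (h | h)
          · have : (b : ZMod k) = ((i - 1 : ℕ) : ZMod k) := by
              rw [ci1]; linear_combination h
            have := natCastInj hk (by omega) (by omega) this
            omega
          · have : (b : ZMod k) = ((i + 1 : ℕ) : ZMod k) := by
              push_cast; linear_combination h
            have := natCastInj hk (by omega) (by omega) this
            omega
        · intro h
          have hb' : b = i - 1 := by omega
          left
          rw [show (b : ℕ) = ((i - 1 : ℕ) : ℕ) from by omega, ci1]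
          ring
      · rw [hbi, seqAt_last, hq j₀ a hai (by omega), G.adj_comm, H1]
        constructor
        · rintro (h | h)
          · have : (a : ZMod k) = ((i - 1 : ℕ) : ZMod k) := by
              rw [ci1]; linear_combination h
            have := natCastInj hk (by omega) (by omega) this
            omega
          · have : (a : ZMod k) = ((i + 1 : ℕ) : ZMod k) := by
              push_cast; linear_combination h
            have := natCastInj hk (by omega) (by omega) this
            omega
        · intro h
          have ha' : a = i - 1 := by omega
          left
          rw [show (a : ℕ) = ((i - 1 : ℕ) : ℕ) from by omega, ci1]
          ring
      · rw [hq j₀ a hai (by omega), hq j₀ b hbi (by omega)]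
        constructor
        · intro h
          rcases cycleAdj hG hk hko hf h with h' | h'
          · left
            have : (b : ZMod k) = ((a + 1 : ℕ) : ZMod k) := by push_cast; linear_combination h'
            exact natCastInj hk (by omega) (by omega) this
          · right
            have : (a : ZMod k) = ((b + 1 : ℕ) : ZMod k) := by push_cast; linear_combination h'
            exact natCastInj hk (by omega) (by omega) this
        · rintro (rfl | rfl)
          · have := hf.2 (j₀ + (a : ℕ))
            rw [show (j₀ + (a:ℕ)) + 1 = j₀ + ((a+1 : ℕ) : ZMod k) from by push_cast; ring] at this
            exact this
          · have := hf.2 (j₀ + (b : ℕ))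
            rw [show (j₀ + (b:ℕ)) + 1 = j₀ + ((b+1 : ℕ) : ZMod k) from by push_cast; ring] at this
            exact this.symm
  · -- uniqueness
    intro j hj
    rw [Set.mem_setOf_eq, hA] at hj
    obtain ⟨hinj, hadj⟩ := hj
    have h1 : G.Adj (f (j + ((i - 1 : ℕ) : ZMod k))) w := by
      have := (hadj (i-1) i (by omega) le_rfl).2 (Or.inl (by omega))
      rwa [hq j (i-1) (by omega) (by omega), seqAt_last] at this
    rcases (H1 _).1 h1.symm with hc | hc
    · show j = α + 1 - (i : ℕ)
      rw [ci1] at hc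
      linear_combination hc
    · exfalso
      have h3 : G.Adj w (f (j + ((i - 3 : ℕ) : ZMod k))) := by
        refine (H1 _).2 (Or.inl ?_)
        rw [ci3]; rw [ci1] at hc; linear_combination hc
      have := (hadj (i-3) i (by omega) le_rfl).1
        (by rw [hq j (i-3) (by omega) (by omega), seqAt_last]; exact h3.symm)
      omega

lemma setCycle :
    {j : ZMod k | w ∈ Aset G k (goodRot f j) (k - 1)} = {α + 2} := by
  haveI : NeZero k := ⟨by omega⟩
  have ck1 : ((k - 1 : ℕ) : ZMod k) = -1 := by
    push_cast [Nat.cast_sub (by omega : 1 ≤ k)]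
    rw [ZMod.natCast_self]; ring
  have ck2 : ((k - 2 : ℕ) : ZMod k) = -2 := by
    push_cast [Nat.cast_sub (by omega : 2 ≤ k)]
    rw [ZMod.natCast_self]; ring
  have h2 : (2 : ZMod k) ≠ 0 :=
    fun h => zmodNe hk hko 2 (by omega) (by left; omega) (by push_cast; linear_combination h)
  have h4 : (4 : ZMod k) ≠ 0 :=
    fun h => zmodNe hk hko 4 (by omega) (by left; omega) (by push_cast; linear_combination h)
  have hA : ∀ j : ZMod k, Aset G k (goodRot f j) (k - 1)
      = {v | IsInducedCycleOn G (seqAt (goodRot f j) v (k - 1)) k} := by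
    intro j
    unfold Aset
    rw [if_neg (by omega : ¬ k - 1 = 0), if_neg (by omega : ¬ k - 1 = 1),
      if_neg (by omega : ¬ k - 1 = 2), if_neg (by omega : ¬ k - 1 = 3), if_pos rfl]
  have hq : ∀ (j : ZMod k) (a : ℕ), a ≠ k - 1 → a < k →
      seqAt (goodRot f j) w (k - 1) a = f (j + (a : ℕ)) :=
    fun j a hh1 hh2 => seqAt_eq hk hko f j w hh1 hh2
  apply Set.eq_singleton_iff_unique_mem.2
  constructor
  · set j₀ : ZMod k := α + 2 with hj₀
    show w ∈ Aset G k (goodRot f j₀) (k - 1)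
    rw [hA]
    constructor
    · intro a b ha hb heq
      by_cases hai : a = k - 1 <;> by_cases hbi : b = k - 1
      · omega
      · exfalso
        rw [hai, seqAt_last, hq j₀ b hbi (by omega)] at heq
        have hb' := H2 _ heq
        have : (b : ZMod k) = ((k - 1 : ℕ) : ZMod k) := by rw [ck1]; linear_combination hb'
        exact hbi (natCastInj hk (by omega) (by omega) this)
      · exfalso
        rw [hbi, seqAt_last, hq j₀ a hai (by omega)] at heq
        have ha' := H2 _ heq.symm
        have : (a : ZMod k) = ((k - 1 : ℕ) : ZMod k) := by rw [ck1]; linear_combination ha'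
        exact hai (natCastInj hk (by omega) (by omega) this)
      · rw [hq j₀ a hai (by omega), hq j₀ b hbi (by omega)] at heq
        have := hf.1 heq
        exact natCastInj hk (by omega) (by omega) (by linear_combination this)
    · intro a b ha hb
      by_cases hai : a = k - 1 <;> by_cases hbi : b = k - 1
      · rw [hai, hbi, seqAt_last]
        exact iff_of_false (G.irrefl) (by omega)
      · rw [hai, seqAt_last, hq j₀ b hbi (by omega), G.adj_comm, G.adj_comm, H1]
        constructor
        · rintro (h | h)
          · have : (b : ZMod k) = ((k - 2 : ℕ) : ZMod k) := by rw [ck2]; linear_combination h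
            have := natCastInj hk (by omega) (by omega) this
            omega
          · have : (b : ZMod k) = ((0 : ℕ) : ZMod k) := by push_cast; linear_combination h
            have := natCastInj hk (by omega) (by omega) this
            omega
        · intro h
          have hb' : b = k - 2 ∨ b = 0 := by omega
          rcases hb' with hb' | hb'
          · left
            rw [show (b : ℕ) = ((k - 2 : ℕ) : ℕ) from by omega, ck2]
            ring
          · right
            rw [show (b : ℕ) = ((0 : ℕ) : ℕ) from by omega]
            push_cast; ring
      · rw [hbi, seqAt_last, hq j₀ a hai (by omega), G.adj_comm, H1]
        constructor
        · rintro (h | h)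
          · have : (a : ZMod k) = ((k - 2 : ℕ) : ZMod k) := by rw [ck2]; linear_combination h
            have := natCastInj hk (by omega) (by omega) this
            omega
          · have : (a : ZMod k) = ((0 : ℕ) : ZMod k) := by push_cast; linear_combination h
            have := natCastInj hk (by omega) (by omega) this
            omega
        · intro h
          have ha' : a = k - 2 ∨ a = 0 := by omega
          rcases ha' with ha' | ha'
          · left
            rw [show (a : ℕ) = ((k - 2 : ℕ) : ℕ) from by omega, ck2]
            ring
          · right
            rw [show (a : ℕ) = ((0 : ℕ) : ℕ) from by omega]
            push_cast; ring
      · rw [hq j₀ a hai (by omega), hq j₀ b hbi (by omega)]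
        constructor
        · intro h
          rcases cycleAdj hG hk hko hf h with h' | h'
          · left; left
            have : (b : ZMod k) = ((a + 1 : ℕ) : ZMod k) := by push_cast; linear_combination h'
            exact natCastInj hk (by omega) (by omega) this
          · left; right
            have : (a : ZMod k) = ((b + 1 : ℕ) : ZMod k) := by push_cast; linear_combination h'
            exact natCastInj hk (by omega) (by omega) this
        · rintro ((rfl | rfl) | ⟨rfl, hb'⟩ | ⟨rfl, ha'⟩)
          · have := hf.2 (j₀ + (a : ℕ))
            rw [show (j₀ + (a:ℕ)) + 1 = j₀ + ((a+1 : ℕ) : ZMod k) from by push_cast; ring] at this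
            exact this
          · have := hf.2 (j₀ + (b : ℕ))
            rw [show (j₀ + (b:ℕ)) + 1 = j₀ + ((b+1 : ℕ) : ZMod k) from by push_cast; ring] at this
            exact this.symm
          · omega
          · omega
  · intro j hj
    rw [Set.mem_setOf_eq, hA] at hj
    obtain ⟨hinj, hadj⟩ := hj
    have e1 : G.Adj (f (j + ((k - 2 : ℕ) : ZMod k))) w := by
      have := (hadj (k-2) (k-1) (by omega) (by omega)).2 (Or.inl (Or.inl (by omega)))
      rwa [hq j (k-2) (by omega) (by omega), seqAt_last] at this
    have e2 : G.Adj (f j) w := by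
      have := (hadj 0 (k-1) (by omega) (by omega)).2 (Or.inr (Or.inl ⟨rfl, rfl⟩))
      rwa [hq j 0 (by omega) (by omega), Nat.cast_zero, add_zero, seqAt_last] at this
    rw [ck2] at e1
    rcases (H1 _).1 e1.symm with hc1 | hc1 <;> rcases (H1 _).1 e2.symm with hc2 | hc2
    · exact absurd (by linear_combination hc2 - hc1) h2
    · exact hc2
    · exact absurd (by linear_combination hc2 - hc1) h4
    · exact absurd (by linear_combination hc2 - hc1) h2

end Sets

end AuxiliaryLemmas

/-- If a vertex `w` has exactly two neighbours on the `k`-cycle `f`, then its contribution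
equals `k - 1`. -/
theorem contrib_of_two_neighbors {V : Type*} [Fintype V] (k : ℕ) (hodd : Odd k)
    (hk : 7 ≤ k) (G : SimpleGraph V) (hG : NoShortOddCycle G k)
    (f : ZMod k → V) (hf : IsCycleMap G f) (w : V)
    (hw : Nat.card ↥{i : ZMod k | G.Adj w (f i)} = 2) :
    contrib G k f w = (k : ℝ) - 1 := by
  haveI : NeZero k := ⟨by omega⟩
  obtain ⟨α, H1, H2⟩ := interface hG hk hodd hf w hw
  have hne : α ≠ α + 2 := by
    intro h
    exact zmodNe hk hodd 2 (by omega) (by left; omega) (by push_cast; linear_combination -h)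
  unfold contrib
  rw [setA1 hG hk hodd hf H1 H2, Nat.card_coe_set_eq, Set.ncard_pair hne]
  have hterm : ∀ i ∈ Finset.Icc 2 (k - 1),
      (Nat.card ↥{j : ZMod k | w ∈ Aset G k (goodRot f j) i} : ℝ) = 1 := by
    intro i hi
    rw [Finset.mem_Icc] at hi
    have hsingle : ∃ x : ZMod k, {j : ZMod k | w ∈ Aset G k (goodRot f j) i} = {x} := by
      rcases (by omega : i = 2 ∨ i = 3 ∨ i = k - 1 ∨ (4 ≤ i ∧ i ≤ k - 2)) with rfl | rfl | rfl | ⟨h4, h5⟩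
      · exact ⟨_, setA2 hG hk hodd hf H1 H2⟩
      · exact ⟨_, setA3 hG hk hodd hf H1 H2⟩
      · exact ⟨_, setCycle hG hk hodd hf H1 H2⟩
      · exact ⟨_, setPath hG hk hodd hf H1 H2 i h4 h5⟩
    obtain ⟨x, hx⟩ := hsingle
    rw [hx, Nat.card_coe_set_eq, Set.ncard_singleton, Nat.cast_one]
  rw [Finset.sum_congr rfl hterm, Finset.sum_const, Nat.card_Icc,
    show k - 1 + 1 - 2 = k - 2 from by omega, nsmul_eq_mul]
  push_cast [Nat.cast_sub (by omega : 2 ≤ k)]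
  ring
end
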